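/- Let A = ℂ[x₁,x₂,x₃]/(2x₁+x₂x₃, 2x₂+x₁x₃, x₁x₂), and let σ be the ℂ-algebra automorphism of A induced by x₁ ↦ −x₁, x₂ ↦ −x₂, x₃ ↦ x₃ (which is well defined since the ideal is stable under this substitution). Then the fixed-point subalgebra A^σ = {a ∈ A : σ(a) = a} is isomorphic as a ℂ-algebra to the polynomial ring ℂ[t], via t ↦ (class of x₃). -/

import Mathlib

set_option maxHeartbeats 1000000

noncomputable section
open MvPolynomial

/-- The Jacobian ideal `(2x₁+x₂x₃, 2x₂+x₁x₃, x₁x₂)` of `W = x₁²+x₂²+x₁x₂x₃` in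
`ℂ[x₁,x₂,x₃]` (variables `X 0, X 1, X 2`). -/
def jacIdeal : Ideal (MvPolynomial (Fin 3) ℂ) :=
  Ideal.span {2 * X 0 + X 1 * X 2, 2 * X 1 + X 0 * X 2, X 0 * X 1}

namespace Stmt15Aux

abbrev A : Type := MvPolynomial (Fin 3) ℂ ⧸ jacIdeal

def e1 : A := Ideal.Quotient.mk jacIdeal (X 0)
def e2 : A := Ideal.Quotient.mk jacIdeal (X 1)
def e3 : A := Ideal.Quotient.mk jacIdeal (X 2)

lemma g1_mem : (2 * X 0 + X 1 * X 2 : MvPolynomial (Fin 3) ℂ) ∈ jacIdeal :=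
  Ideal.subset_span (by simp)

lemma g2_mem : (2 * X 1 + X 0 * X 2 : MvPolynomial (Fin 3) ℂ) ∈ jacIdeal :=
  Ideal.subset_span (by simp)

lemma g3_mem : (X 0 * X 1 : MvPolynomial (Fin 3) ℂ) ∈ jacIdeal :=
  Ideal.subset_span (by simp)

lemma sq1_mem : (X 0 * X 0 : MvPolynomial (Fin 3) ℂ) ∈ jacIdeal := by
  have h2 : (2 * (X 0 * X 0) : MvPolynomial (Fin 3) ℂ) ∈ jacIdeal := by
    have h := Ideal.sub_mem _ (Ideal.mul_mem_left _ (X 0) g1_mem)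
      (Ideal.mul_mem_left _ (X 2) g3_mem)
    have heq : (X 0 * (2 * X 0 + X 1 * X 2) - X 2 * (X 0 * X 1) : MvPolynomial (Fin 3) ℂ)
        = 2 * (X 0 * X 0) := by ring
    rwa [heq] at h
  have h3 : (X 0 * X 0 : MvPolynomial (Fin 3) ℂ) = C (1/2) * (2 * (X 0 * X 0)) := by
    rw [show (2 : MvPolynomial (Fin 3) ℂ) = C 2 from (map_ofNat C 2).symm, ← mul_assoc, ← C_mul]
    norm_num
  rw [h3]
  exact Ideal.mul_mem_left _ _ h2

lemma sq2_mem : (X 1 * X 1 : MvPolynomial (Fin 3) ℂ) ∈ jacIdeal := by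
  have h2 : (2 * (X 1 * X 1) : MvPolynomial (Fin 3) ℂ) ∈ jacIdeal := by
    have h := Ideal.sub_mem _ (Ideal.mul_mem_left _ (X 1) g2_mem)
      (Ideal.mul_mem_left _ (X 2) g3_mem)
    have heq : (X 1 * (2 * X 1 + X 0 * X 2) - X 2 * (X 0 * X 1) : MvPolynomial (Fin 3) ℂ)
        = 2 * (X 1 * X 1) := by ring
    rwa [heq] at h
  have h3 : (X 1 * X 1 : MvPolynomial (Fin 3) ℂ) = C (1/2) * (2 * (X 1 * X 1)) := by
    rw [show (2 : MvPolynomial (Fin 3) ℂ) = C 2 from (map_ofNat C 2).symm, ← mul_assoc, ← C_mul]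
    norm_num
  rw [h3]
  exact Ideal.mul_mem_left _ _ h2

lemma rel11 : e1 * e1 = 0 := by
  rw [e1, ← map_mul, Ideal.Quotient.eq_zero_iff_mem]; exact sq1_mem

lemma rel22 : e2 * e2 = 0 := by
  rw [e2, ← map_mul, Ideal.Quotient.eq_zero_iff_mem]; exact sq2_mem

lemma rel12 : e1 * e2 = 0 := by
  rw [e1, e2, ← map_mul, Ideal.Quotient.eq_zero_iff_mem]; exact g3_mem

lemma smul_neg_two (u : A) : (-2 : ℂ) • u = -(2 * u) := by
  rw [← algebraMap_smul A (-2 : ℂ) u, smul_eq_mul, map_neg, map_ofNat]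
  ring

lemma rel13 : e1 * e3 = (-2 : ℂ) • e2 := by
  have h : Ideal.Quotient.mk jacIdeal (2 * X 1 + X 0 * X 2) = 0 :=
    Ideal.Quotient.eq_zero_iff_mem.mpr g2_mem
  rw [map_add, map_mul, map_mul, map_ofNat] at h
  rw [e1, e2, e3, smul_neg_two]
  linear_combination h

lemma rel23 : e2 * e3 = (-2 : ℂ) • e1 := by
  have h : Ideal.Quotient.mk jacIdeal (2 * X 0 + X 1 * X 2) = 0 :=
    Ideal.Quotient.eq_zero_iff_mem.mpr g1_mem
  rw [map_add, map_mul, map_mul, map_ofNat] at h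
  rw [e1, e2, e3, smul_neg_two]
  linear_combination h

/-- the algebra map `ℂ[t] → A`, `t ↦ e3`. -/
def φ : Polynomial ℂ →ₐ[ℂ] A := Polynomial.aeval e3

lemma φ_C (c : ℂ) : φ (Polynomial.C c) = algebraMap ℂ A c := by
  simp [φ]

lemma mul_e1 (q : Polynomial ℂ) : ∃ a b : ℂ, φ q * e1 = a • e1 + b • e2 := by
  induction q using Polynomial.induction_on with
  | C c =>
    refine ⟨c, 0, ?_⟩
    rw [φ_C, ← Algebra.smul_def, zero_smul, add_zero]
  | add p q hp hq =>
    obtain ⟨a, b, hp⟩ := hp; obtain ⟨a', b', hq⟩ := hq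
    exact ⟨a + a', b + b', by rw [map_add, add_mul, hp, hq]; module⟩
  | monomial n c h =>
    obtain ⟨a, b, h⟩ := h
    refine ⟨-2 * b, -2 * a, ?_⟩
    have hstep : φ (Polynomial.C c * Polynomial.X ^ (n + 1))
        = φ (Polynomial.C c * Polynomial.X ^ n) * e3 := by
      simp [φ, pow_succ, mul_assoc]
    rw [hstep, mul_right_comm, h, add_mul, smul_mul_assoc, smul_mul_assoc, rel13, rel23,
      smul_smul, smul_smul]
    module

lemma mul_e2 (q : Polynomial ℂ) : ∃ a b : ℂ, φ q * e2 = a • e1 + b • e2 := by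
  induction q using Polynomial.induction_on with
  | C c =>
    refine ⟨0, c, ?_⟩
    rw [φ_C, ← Algebra.smul_def, zero_smul, zero_add]
  | add p q hp hq =>
    obtain ⟨a, b, hp⟩ := hp; obtain ⟨a', b', hq⟩ := hq
    exact ⟨a + a', b + b', by rw [map_add, add_mul, hp, hq]; module⟩
  | monomial n c h =>
    obtain ⟨a, b, h⟩ := h
    refine ⟨-2 * b, -2 * a, ?_⟩
    have hstep : φ (Polynomial.C c * Polynomial.X ^ (n + 1))
        = φ (Polynomial.C c * Polynomial.X ^ n) * e3 := by
      simp [φ, pow_succ, mul_assoc]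
    rw [hstep, mul_right_comm, h, add_mul, smul_mul_assoc, smul_mul_assoc, rel13, rel23,
      smul_smul, smul_smul]
    module

lemma decomp (p : MvPolynomial (Fin 3) ℂ) :
    ∃ (q : Polynomial ℂ) (a b : ℂ),
      Ideal.Quotient.mk jacIdeal p = φ q + a • e1 + b • e2 := by
  induction p using MvPolynomial.induction_on with
  | C c =>
    refine ⟨Polynomial.C c, 0, 0, ?_⟩
    rw [φ_C, zero_smul, zero_smul, add_zero, add_zero]
    rfl
  | add p q hp hq =>
    obtain ⟨q1, a1, b1, hp⟩ := hp; obtain ⟨q2, a2, b2, hq⟩ := hq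
    exact ⟨q1 + q2, a1 + a2, b1 + b2, by rw [map_add, hp, hq, map_add]; module⟩
  | mul_X p i hp =>
    obtain ⟨q, a, b, hp⟩ := hp
    have key : ∀ i : Fin 3, Ideal.Quotient.mk jacIdeal (p * X i)
        = (φ q + a • e1 + b • e2) * Ideal.Quotient.mk jacIdeal (X i) := by
      intro i; rw [map_mul, hp]
    fin_cases i
    · obtain ⟨a', b', h⟩ := mul_e1 q
      refine ⟨0, a', b', ?_⟩
      show Ideal.Quotient.mk jacIdeal (p * X 0) = φ 0 + a' • e1 + b' • e2
      rw [key 0, map_zero, zero_add]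
      have : (φ q + a • e1 + b • e2) * e1
          = φ q * e1 + a • (e1 * e1) + b • (e1 * e2) := by
        rw [mul_comm e1 e2]
        rw [add_mul, add_mul, smul_mul_assoc, smul_mul_assoc]
      rw [show Ideal.Quotient.mk jacIdeal (X 0) = e1 from rfl, this, rel11, rel12, h]
      simp
    · obtain ⟨a', b', h⟩ := mul_e2 q
      refine ⟨0, a', b', ?_⟩
      show Ideal.Quotient.mk jacIdeal (p * X 1) = φ 0 + a' • e1 + b' • e2
      rw [key 1, map_zero, zero_add]
      have : (φ q + a • e1 + b • e2) * e2
          = φ q * e2 + a • (e1 * e2) + b • (e2 * e2) := by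
        rw [add_mul, add_mul, smul_mul_assoc, smul_mul_assoc]
      rw [show Ideal.Quotient.mk jacIdeal (X 1) = e2 from rfl, this, rel22, rel12, h]
      simp
    · refine ⟨q * Polynomial.X, -2 * b, -2 * a, ?_⟩
      show Ideal.Quotient.mk jacIdeal (p * X 2)
        = φ (q * Polynomial.X) + (-2 * b) • e1 + (-2 * a) • e2
      rw [key 2]
      have hq : φ (q * Polynomial.X) = φ q * e3 := by simp [φ]
      have : (φ q + a • e1 + b • e2) * e3
          = φ q * e3 + a • (e1 * e3) + b • (e2 * e3) := by
        rw [add_mul, add_mul, smul_mul_assoc, smul_mul_assoc]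
      rw [show Ideal.Quotient.mk jacIdeal (X 2) = e3 from rfl, this, rel13, rel23, hq,
        smul_smul, smul_smul]
      module

/-- left inverse `A → ℂ[t]` killing x₁,x₂ and sending x₃ to t. -/
def ψ : A →ₐ[ℂ] Polynomial ℂ :=
  Ideal.Quotient.liftₐ jacIdeal (aeval ![0, 0, Polynomial.X]) (by
    intro a ha
    have hle : jacIdeal ≤ RingHom.ker
        ((aeval ![0, 0, Polynomial.X] : MvPolynomial (Fin 3) ℂ →ₐ[ℂ] Polynomial ℂ)
          : MvPolynomial (Fin 3) ℂ →+* Polynomial ℂ) := by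
      rw [jacIdeal, Ideal.span_le]
      intro p hpmem
      simp only [Set.mem_insert_iff, Set.mem_singleton_iff] at hpmem
      rcases hpmem with rfl | rfl | rfl <;>
        simp [RingHom.mem_ker]
    exact RingHom.mem_ker.mp (hle ha))

lemma ψφ (q : Polynomial ℂ) : ψ (φ q) = q := by
  have h : ψ.comp φ = AlgHom.id ℂ (Polynomial ℂ) := by
    apply Polynomial.algHom_ext
    simp [φ, ψ, e3]
    show aeval ![0, 0, Polynomial.X] (X 2 : MvPolynomial (Fin 3) ℂ) = Polynomial.X
    simp
  calc ψ (φ q) = (ψ.comp φ) q := rfl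
    _ = q := by rw [h]; rfl

lemma φ_inj : Function.Injective φ :=
  Function.LeftInverse.injective ψφ

end Stmt15Aux

open Stmt15Aux in
theorem stmt15
    (σ : (MvPolynomial (Fin 3) ℂ ⧸ jacIdeal) ≃ₐ[ℂ] (MvPolynomial (Fin 3) ℂ ⧸ jacIdeal))
    (hσ1 : σ (Ideal.Quotient.mk jacIdeal (X 0)) = - Ideal.Quotient.mk jacIdeal (X 0))
    (hσ2 : σ (Ideal.Quotient.mk jacIdeal (X 1)) = - Ideal.Quotient.mk jacIdeal (X 1))
    (hσ3 : σ (Ideal.Quotient.mk jacIdeal (X 2)) = Ideal.Quotient.mk jacIdeal (X 2)) :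
    ∃ e : Polynomial ℂ ≃ₐ[ℂ]
        (AlgHom.equalizer (σ : (MvPolynomial (Fin 3) ℂ ⧸ jacIdeal) →ₐ[ℂ] _)
          (AlgHom.id ℂ (MvPolynomial (Fin 3) ℂ ⧸ jacIdeal))),
      (e Polynomial.X : MvPolynomial (Fin 3) ℂ ⧸ jacIdeal) =
        Ideal.Quotient.mk jacIdeal (X 2) := by
  have hfix : ∀ q : Polynomial ℂ, σ (φ q) = φ q := by
    intro q
    have h : (σ : A →ₐ[ℂ] A).comp φ = φ := by
      apply Polynomial.algHom_ext
      simpa [φ, e3] using hσ3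
    calc σ (φ q) = ((σ : A →ₐ[ℂ] A).comp φ) q := rfl
      _ = φ q := by rw [h]
  set T := AlgHom.equalizer (σ : A →ₐ[ℂ] A) (AlgHom.id ℂ A) with hT
  have hmem : ∀ q : Polynomial ℂ, φ q ∈ T := by
    intro q
    show (σ : A →ₐ[ℂ] A) (φ q) = AlgHom.id ℂ A (φ q)
    simpa using hfix q
  set φ' : Polynomial ℂ →ₐ[ℂ] T := φ.codRestrict T hmem with hφ'
  have hinj : Function.Injective φ' := by
    intro x y hxy
    apply φ_inj
    exact congrArg Subtype.val hxy
  have hsurj : Function.Surjective φ' := by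
    rintro ⟨x, hx⟩
    obtain ⟨p, rfl⟩ := Ideal.Quotient.mk_surjective x
    have hx' : σ (Ideal.Quotient.mk jacIdeal p) = Ideal.Quotient.mk jacIdeal p := hx
    obtain ⟨q, a, b, hdec⟩ := decomp p
    have hσe1 : σ e1 = -e1 := hσ1
    have hσe2 : σ e2 = -e2 := hσ2
    have hσp : σ (Ideal.Quotient.mk jacIdeal p) = φ q - a • e1 - b • e2 := by
      rw [hdec, map_add, map_add, map_smul, map_smul, hσe1, hσe2, hfix]
      module
    have heq : φ q + a • e1 + b • e2 = φ q - a • e1 - b • e2 :=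
      hdec.symm.trans (hx'.symm.trans hσp)
    have hu : a • e1 + b • e2 = 0 := by
      have h2 : (2 : ℂ) • (a • e1 + b • e2) = 0 := by
        calc (2 : ℂ) • (a • e1 + b • e2)
            = (φ q + a • e1 + b • e2) - (φ q - a • e1 - b • e2) := by module
          _ = 0 := sub_eq_zero_of_eq heq
      have h3 := congrArg (fun x : A => (2⁻¹ : ℂ) • x) h2
      simpa [smul_smul] using h3
    refine ⟨q, ?_⟩
    apply Subtype.ext
    show φ q = Ideal.Quotient.mk jacIdeal p
    rw [hdec, add_assoc, hu, add_zero]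
  refine ⟨AlgEquiv.ofBijective φ' ⟨hinj, hsurj⟩, ?_⟩
  show ((φ' Polynomial.X : T) : A) = Ideal.Quotient.mk jacIdeal (X 2)
  show φ Polynomial.X = _
  simp [φ, e3]
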